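/- Let C := {f ∈ L¹[0,1] : f ≥ 0 a.e. and ∫₀¹ f = 1} and, for a ∈ [0,1], let C_a be the convex hull of C ∪ {a·𝟙}, where 𝟙 is the constant function 1. The sequence f_n := n·χ_{[0,1/n]} lies in C, converges to 0 Lebesgue-almost everywhere, satisfies limsup_n ‖f_n − 0‖₁ = 1, and for every h ∈ C_a, limsup_n ‖f_n − h‖₁ ≥ 1 + a. Consequently, the coefficient t(C_a) (the infimum of all λ ≥ 0 such that for every sequence (x_n) ⊆ C_a converging a.e. to some x ∈ L¹[0,1], inf_{c∈C_a} limsup_n ‖c − x_n‖₁ ≤ λ·limsup_n ‖x − x_n‖₁) satisfies t(C_a) ≥ 1 + a. -/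

import Mathlib

open MeasureTheory Filter Topology

/-- Lebesgue measure on `[0,1]`. -/
noncomputable def μ01 : Measure ℝ := volume.restrict (Set.Icc 0 1)

instance : IsFiniteMeasure μ01 := by
  constructor
  simp [μ01, Real.volume_Icc]

/-- The constant function `1` as an element of `L¹[0,1]`. -/
noncomputable def oneL1 : Lp ℝ 1 μ01 := (memLp_const (1 : ℝ)).toLp (fun _ => (1 : ℝ))

/-- `C = {f ∈ L¹[0,1] : f ≥ 0 a.e., ∫ f = 1}`. -/
noncomputable def posProbC : Set (Lp ℝ 1 μ01) :=
  {f | (∀ᵐ t ∂μ01, 0 ≤ f t) ∧ ∫ t, f t ∂μ01 = 1}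

/-- `f_n = n · χ_{[0,1/n]}` as an element of `L¹[0,1]`. -/
noncomputable def rect (n : ℕ) : Lp ℝ 1 μ01 :=
  indicatorConstLp 1 measurableSet_Icc (measure_ne_top μ01 (Set.Icc 0 (1 / (n : ℝ)))) (n : ℝ)

/-- The coefficient `t(C)` of a set `C ⊆ L¹[0,1]`, relative to a.e. convergence. -/
noncomputable def tCoef (C : Set (Lp ℝ 1 μ01)) : ℝ :=
  sInf {l : ℝ | 0 ≤ l ∧ ∀ (xs : ℕ → Lp ℝ 1 μ01) (x : Lp ℝ 1 μ01),
    (∀ n, xs n ∈ C) →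
    (∀ᵐ t ∂μ01, Tendsto (fun n => (xs n : ℝ → ℝ) t) atTop (𝓝 ((x : ℝ → ℝ) t))) →
    sInf ((fun c => limsup (fun n => ‖c - xs n‖) atTop) '' C) ≤
      l * limsup (fun n => ‖x - xs n‖) atTop}

/-! ### Auxiliary lemmas -/

lemma μ01_univ : μ01 Set.univ = 1 := by simp [μ01, Real.volume_Icc]

lemma μ01_Icc (r : ℝ) (h0 : 0 ≤ r) (h1 : r ≤ 1) : μ01 (Set.Icc 0 r) = ENNReal.ofReal r := by
  rw [μ01, Measure.restrict_apply measurableSet_Icc, Set.Icc_inter_Icc]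
  simp [h1, Real.volume_Icc, h0]

lemma rect_coe (n : ℕ) :
    (rect n : ℝ → ℝ) =ᵐ[μ01] (Set.Icc 0 (1/(n:ℝ))).indicator (fun _ => (n:ℝ)) :=
  indicatorConstLp_coeFn

lemma integral_rect (n : ℕ) (hn : 1 ≤ n) : ∫ t, (rect n : ℝ → ℝ) t ∂μ01 = 1 := by
  have hn' : (0:ℝ) < n := by exact_mod_cast hn
  rw [integral_congr_ae (rect_coe n), integral_indicator_const _ measurableSet_Icc,
    measureReal_def, μ01_Icc _ (by positivity) (by rw [div_le_one hn']; exact_mod_cast hn)]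
  rw [ENNReal.toReal_ofReal (by positivity)]
  rw [smul_eq_mul]; field_simp

lemma norm_rect (n : ℕ) (hn : 1 ≤ n) : ‖rect n‖ = 1 := by
  have hn' : (0:ℝ) < n := by exact_mod_cast hn
  rw [rect, norm_indicatorConstLp one_ne_zero ENNReal.one_ne_top,
    measureReal_def, μ01_Icc _ (by positivity) (by rw [div_le_one hn']; exact_mod_cast hn)]
  simp [ENNReal.toReal_ofReal (by positivity : (0:ℝ) ≤ 1/(n:ℝ)), abs_of_pos hn']
  field_simp

lemma norm_rect_le (n : ℕ) : ‖rect n‖ ≤ 1 := by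
  cases n with
  | zero =>
      rw [rect, norm_indicatorConstLp one_ne_zero ENNReal.one_ne_top]
      simp
  | succ m => rw [norm_rect (m+1) (Nat.le_add_left 1 m)]

lemma rect_mem (n : ℕ) (hn : 1 ≤ n) : rect n ∈ posProbC := by
  refine ⟨?_, integral_rect n hn⟩
  filter_upwards [rect_coe n] with t ht
  rw [ht]
  exact Set.indicator_nonneg (fun _ _ => by positivity) t

lemma ae_mem01 : ∀ᵐ t ∂μ01, t ∈ Set.Icc (0:ℝ) 1 := ae_restrict_mem measurableSet_Icc

lemma ae_ne_zero : ∀ᵐ t ∂μ01, t ≠ 0 := by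
  refine ae_iff.2 ?_
  have : {t : ℝ | ¬ t ≠ 0} = {0} := by ext t; simp
  rw [this]
  exact le_antisymm (le_trans (Measure.restrict_le_self _) (by simp)) zero_le

lemma rect_tendsto_ae :
    ∀ᵐ t ∂μ01, Tendsto (fun n => (rect n : ℝ → ℝ) t) atTop (𝓝 0) := by
  filter_upwards [ae_all_iff.2 rect_coe, ae_mem01, ae_ne_zero] with t h1 h2 h3
  have ht : 0 < t := lt_of_le_of_ne h2.1 (Ne.symm h3)
  have hev : ∀ᶠ n : ℕ in atTop, (1:ℝ)/(n:ℝ) < t :=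
    tendsto_one_div_atTop_nhds_zero_nat.eventually_lt_const ht
  refine tendsto_const_nhds.congr' ?_
  filter_upwards [hev] with n hn
  rw [h1 n, Set.indicator_of_notMem]
  simp only [Set.mem_Icc, not_and_or]
  right; exact not_le.2 hn

lemma coe_comb (u v : ℝ) (f g : Lp ℝ 1 μ01) :
    ((u • f + v • g : Lp ℝ 1 μ01) : ℝ → ℝ) =ᵐ[μ01] fun t => u * f t + v * g t := by
  filter_upwards [Lp.coeFn_add (u • f) (v • g), Lp.coeFn_smul u f, Lp.coeFn_smul v g]
    with t h1 h2 h3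
  rw [h1, Pi.add_apply, h2, h3, Pi.smul_apply, Pi.smul_apply, smul_eq_mul, smul_eq_mul]

lemma integral_comb (u v : ℝ) (f g : Lp ℝ 1 μ01) :
    ∫ t, ((u • f + v • g : Lp ℝ 1 μ01) : ℝ → ℝ) t ∂μ01
      = u * ∫ t, f t ∂μ01 + v * ∫ t, g t ∂μ01 := by
  rw [integral_congr_ae (coe_comb u v f g),
    integral_add ((L1.integrable_coeFn f).const_mul u) ((L1.integrable_coeFn g).const_mul v),
    integral_const_mul, integral_const_mul]

lemma oneL1_coe : (oneL1 : ℝ → ℝ) =ᵐ[μ01] fun _ => (1:ℝ) := MemLp.coeFn_toLp _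

lemma smul_oneL1_coe (a : ℝ) : ((a • oneL1 : Lp ℝ 1 μ01) : ℝ → ℝ) =ᵐ[μ01] fun _ => a := by
  filter_upwards [Lp.coeFn_smul a oneL1, oneL1_coe] with t h1 h2
  simp [h1, h2]

lemma integral_smul_oneL1 (a : ℝ) : ∫ t, ((a • oneL1 : Lp ℝ 1 μ01) : ℝ → ℝ) t ∂μ01 = a := by
  rw [integral_congr_ae (smul_oneL1_coe a), integral_const]
  simp [measureReal_def, μ01_univ]

/-- Every element of the convex hull `C_a` is a.e. nonnegative and has integral `≥ a`. -/
lemma mem_D {a : ℝ} (ha : a ∈ Set.Icc (0:ℝ) 1) {h : Lp ℝ 1 μ01}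
    (hh : h ∈ convexHull ℝ (posProbC ∪ {a • oneL1})) :
    (∀ᵐ t ∂μ01, 0 ≤ (h : ℝ → ℝ) t) ∧ a ≤ ∫ t, (h : ℝ → ℝ) t ∂μ01 := by
  revert h
  rw [← Set.setOf_subset_setOf (p := fun h : Lp ℝ 1 μ01 => h ∈ _)]
  refine convexHull_min ?_ ?_
  · rintro f (⟨h1, h2⟩ | rfl)
    · exact ⟨h1, by rw [h2]; exact ha.2⟩
    · refine ⟨?_, by rw [integral_smul_oneL1]⟩
      filter_upwards [smul_oneL1_coe a] with t h1
      rw [h1]; exact ha.1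
  · rintro f ⟨hf1, hf2⟩ g ⟨hg1, hg2⟩ u v hu hv huv
    constructor
    · filter_upwards [coe_comb u v f g, hf1, hg1] with t h1 h2 h3
      rw [h1]; positivity
    · rw [integral_comb]
      calc a = u * a + v * a := by rw [← add_mul, huv, one_mul]
        _ ≤ _ := add_le_add (mul_le_mul_of_nonneg_left hf2 hu)
          (mul_le_mul_of_nonneg_left hg2 hv)

/-- Every element of `C_a` has norm at most `1`. -/
lemma norm_le_one_of_mem {a : ℝ} (ha : a ∈ Set.Icc (0:ℝ) 1) {c : Lp ℝ 1 μ01}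
    (hc : c ∈ convexHull ℝ (posProbC ∪ {a • oneL1})) : ‖c‖ ≤ 1 := by
  have hsub : convexHull ℝ (posProbC ∪ {a • oneL1}) ⊆ Metric.closedBall 0 1 := by
    refine convexHull_min ?_ (convex_closedBall 0 1)
    rintro f (⟨h1, h2⟩ | rfl)
    · rw [Metric.mem_closedBall, dist_zero_right, L1.norm_eq_integral_norm]
      have : ∫ t, ‖(f : ℝ → ℝ) t‖ ∂μ01 = ∫ t, (f : ℝ → ℝ) t ∂μ01 := by
        refine integral_congr_ae ?_
        filter_upwards [h1] with t ht
        rw [Real.norm_eq_abs, abs_of_nonneg ht]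
      rw [this, h2]
    · rw [Metric.mem_closedBall, dist_zero_right, L1.norm_eq_integral_norm]
      have : ∫ t, ‖((a • oneL1 : Lp ℝ 1 μ01) : ℝ → ℝ) t‖ ∂μ01 = ∫ t, (a:ℝ) ∂μ01 := by
        refine integral_congr_ae ?_
        filter_upwards [smul_oneL1_coe a] with t ht
        rw [ht, Real.norm_eq_abs, abs_of_nonneg ha.1]
      rw [this, integral_const]
      simpa [measureReal_def, μ01_univ] using ha.2
  simpa using hsub hc

lemma eps_tendsto (h : Lp ℝ 1 μ01) :
    Tendsto (fun n : ℕ =>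
      ∫ t, (Set.Icc 0 (1/(n:ℝ))).indicator (fun s => (h : ℝ → ℝ) s) t ∂μ01) atTop (𝓝 0) := by
  have h0 : (0:ℝ) = ∫ _t, (0:ℝ) ∂μ01 := by simp
  rw [h0]
  refine tendsto_integral_of_dominated_convergence (fun t => ‖(h : ℝ → ℝ) t‖)
    (fun _n => (Lp.aestronglyMeasurable h).indicator measurableSet_Icc)
    (L1.integrable_coeFn h).norm
    (fun _n => Eventually.of_forall fun t => norm_indicator_le_norm_self _ t) ?_
  filter_upwards [ae_mem01, ae_ne_zero] with t h2 h3
  have ht : 0 < t := lt_of_le_of_ne h2.1 (Ne.symm h3)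
  have hev : ∀ᶠ n : ℕ in atTop, (1:ℝ)/(n:ℝ) < t :=
    tendsto_one_div_atTop_nhds_zero_nat.eventually_lt_const ht
  refine tendsto_const_nhds.congr' ?_
  filter_upwards [hev] with n hn
  rw [Set.indicator_of_notMem]
  simp only [Set.mem_Icc, not_and_or]
  right; exact not_le.2 hn

lemma norm_sub_ge (h : Lp ℝ 1 μ01) (hpos : ∀ᵐ t ∂μ01, 0 ≤ (h : ℝ → ℝ) t)
    (n : ℕ) (hn : 1 ≤ n) :
    1 + (∫ t, (h : ℝ → ℝ) t ∂μ01)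
      - 2 * ∫ t, (Set.Icc 0 (1/(n:ℝ))).indicator (fun s => (h : ℝ → ℝ) s) t ∂μ01
      ≤ ‖rect n - h‖ := by
  rw [L1.norm_eq_integral_norm]
  have hint_ind : Integrable ((Set.Icc 0 (1/(n:ℝ))).indicator (fun s => (h : ℝ → ℝ) s)) μ01 :=
    (L1.integrable_coeFn h).indicator measurableSet_Icc
  have key : ∫ t, ((rect n : ℝ → ℝ) t + (h : ℝ → ℝ) t
      - 2 * (Set.Icc 0 (1/(n:ℝ))).indicator (fun s => (h : ℝ → ℝ) s) t) ∂μ01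
      ≤ ∫ t, ‖((rect n - h : Lp ℝ 1 μ01) : ℝ → ℝ) t‖ ∂μ01 := by
    refine integral_mono_ae
      (((L1.integrable_coeFn (rect n)).add (L1.integrable_coeFn h)).sub
        (hint_ind.const_mul 2))
      (L1.integrable_coeFn _).norm ?_
    filter_upwards [rect_coe n, hpos, Lp.coeFn_sub (rect n) h] with t h1 h2 h3
    rw [h3, Pi.sub_apply, h1]
    by_cases hm : t ∈ Set.Icc 0 (1/(n:ℝ))
    · rw [Set.indicator_of_mem hm, Set.indicator_of_mem hm]
      have : (n:ℝ) + (h : ℝ → ℝ) t - 2 * (h : ℝ → ℝ) t = (n:ℝ) - (h : ℝ → ℝ) t := by ring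
      rw [this]
      exact le_abs_self _
    · rw [Set.indicator_of_notMem hm, Set.indicator_of_notMem hm]
      simpa using le_abs_self ((h : ℝ → ℝ) t)
  refine le_trans (le_of_eq ?_) key
  have e1 : Integrable (fun t => (rect n : ℝ → ℝ) t + (h : ℝ → ℝ) t) μ01 :=
    (L1.integrable_coeFn (rect n)).add (L1.integrable_coeFn h)
  have e2 : Integrable
      (fun t => 2 * (Set.Icc 0 (1/(n:ℝ))).indicator (fun s => (h : ℝ → ℝ) s) t) μ01 :=
    hint_ind.const_mul 2
  have e3 : Integrable (fun t => (rect n : ℝ → ℝ) t) μ01 := L1.integrable_coeFn (rect n)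
  have e4 : Integrable (fun t => (h : ℝ → ℝ) t) μ01 := L1.integrable_coeFn h
  rw [integral_sub e1 e2, integral_add e3 e4, integral_rect n hn,
    MeasureTheory.integral_const_mul]

/-- Key limsup lower bound, for any shift `k`. -/
lemma key_limsup {a : ℝ} (ha : a ∈ Set.Icc (0:ℝ) 1) {h : Lp ℝ 1 μ01}
    (hh : h ∈ convexHull ℝ (posProbC ∪ {a • oneL1})) (k : ℕ) :
    1 + a ≤ limsup (fun n => ‖rect (n + k) - h‖) atTop := by
  obtain ⟨hpos, hint⟩ := mem_D ha hh
  set I := ∫ t, (h : ℝ → ℝ) t ∂μ01 with hI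
  set E : ℕ → ℝ := fun n =>
    ∫ t, (Set.Icc 0 (1/(n:ℝ))).indicator (fun s => (h : ℝ → ℝ) s) t ∂μ01 with hE
  have hE0 : Tendsto (fun n => 1 + I - 2 * E (n + k)) atTop (𝓝 (1 + I)) := by
    have h1 : Tendsto (fun n => E (n + k)) atTop (𝓝 0) :=
      (eps_tendsto h).comp (tendsto_add_atTop_nat k)
    have := (tendsto_const_nhds (x := 1 + I) (f := atTop)).sub (h1.const_mul 2)
    simpa using this
  have hbdd : IsBoundedUnder (· ≤ ·) atTop (fun n : ℕ => ‖rect (n + k) - h‖) :=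
    isBoundedUnder_of ⟨1 + ‖h‖, fun n =>
      le_trans (norm_sub_le _ _) (by gcongr; exact norm_rect_le _)⟩
  have hmono : limsup (fun n => 1 + I - 2 * E (n + k)) atTop
      ≤ limsup (fun n => ‖rect (n + k) - h‖) atTop := by
    refine limsup_le_limsup ?_ hE0.isBoundedUnder_ge.isCoboundedUnder_le hbdd
    filter_upwards [eventually_ge_atTop 1] with n hn
    exact norm_sub_ge h hpos (n + k) (le_trans hn (Nat.le_add_right _ _))
  rw [hE0.limsup_eq] at hmono
  have : a ≤ I := hint
  linarith

/-- The sequence `f_n = n·χ_{[0,1/n]}` lies in `C`, tends to `0` a.e., has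
`limsup ‖f_n - 0‖ = 1`, while `limsup ‖f_n - h‖ ≥ 1 + a` for every `h ∈ C_a`; consequently
`t(C_a) ≥ 1 + a`. -/
theorem tCoef_Ca_ge_one_add (a : ℝ) (ha : a ∈ Set.Icc (0 : ℝ) 1) :
    (∀ n : ℕ, 1 ≤ n → rect n ∈ posProbC) ∧
    (∀ᵐ t ∂μ01, Tendsto (fun n => (rect n : ℝ → ℝ) t) atTop (𝓝 0)) ∧
    limsup (fun n => ‖rect n - 0‖) atTop = 1 ∧
    (∀ h ∈ convexHull ℝ (posProbC ∪ {a • oneL1}),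
      1 + a ≤ limsup (fun n => ‖rect n - h‖) atTop) ∧
    1 + a ≤ tCoef (convexHull ℝ (posProbC ∪ {a • oneL1})) := by
  refine ⟨rect_mem, rect_tendsto_ae, ?_, fun h hh => by simpa using key_limsup ha hh 0, ?_⟩
  · -- limsup ‖rect n - 0‖ = 1
    have ev : ∀ᶠ n : ℕ in atTop, ‖rect n - 0‖ = (1:ℝ) := by
      filter_upwards [eventually_ge_atTop 1] with n hn
      rw [sub_zero, norm_rect n hn]
    rw [limsup_congr ev, limsup_const]
  · -- the coefficient bound
    rw [tCoef]
    have hCane : (a • oneL1) ∈ convexHull ℝ (posProbC ∪ {a • oneL1}) :=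
      subset_convexHull ℝ _ (Set.mem_union_right _ rfl)
    refine le_csInf ⟨2, by norm_num, ?_⟩ ?_
    · -- `2` belongs to the defining set
      intro xs x hmem _hconv
      have hxsnorm : ∀ n, ‖xs n‖ ≤ 1 := fun n => norm_le_one_of_mem ha (hmem n)
      have hbdd : IsBoundedUnder (· ≤ ·) atTop (fun n => ‖x - xs n‖) :=
        isBoundedUnder_of ⟨‖x‖ + 1, fun n =>
          (norm_sub_le _ _).trans (by gcongr; exact hxsnorm n)⟩
      have hcobdd : IsCoboundedUnder (· ≤ ·) atTop (fun n => ‖x - xs n‖) :=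
        (isBoundedUnder_of ⟨0, fun m => norm_nonneg _⟩ :
          IsBoundedUnder (· ≥ ·) atTop _).isCoboundedUnder_le
      set r := limsup (fun n => ‖x - xs n‖) atTop with hr
      have hr0 : 0 ≤ r :=
        le_limsup_of_frequently_le (Frequently.of_forall fun n => norm_nonneg _) hbdd
      have hBddImg : BddBelow ((fun c => limsup (fun n => ‖c - xs n‖) atTop) ''
          convexHull ℝ (posProbC ∪ {a • oneL1})) := by
        refine ⟨0, ?_⟩
        rintro y ⟨c, hc, rfl⟩
        refine le_limsup_of_frequently_le (Frequently.of_forall fun n => norm_nonneg _) ?_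
        exact isBoundedUnder_of ⟨‖c‖ + 1, fun n =>
          (norm_sub_le _ _).trans (by gcongr; exact hxsnorm n)⟩
      have main : ∀ ε > 0,
          sInf ((fun c => limsup (fun n => ‖c - xs n‖) atTop) ''
            convexHull ℝ (posProbC ∪ {a • oneL1})) ≤ 2 * r + ε := by
        intro ε hε
        have hev : ∀ᶠ n in atTop, ‖x - xs n‖ < r + ε :=
          eventually_lt_of_limsup_lt (by linarith) hbdd
        obtain ⟨n, hn⟩ := hev.exists
        have h1 : limsup (fun m => ‖xs n - xs m‖) atTop ≤ ‖xs n - x‖ + r := by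
          have step : limsup (fun m => ‖xs n - xs m‖) atTop
              ≤ limsup (fun m => ‖xs n - x‖ + ‖x - xs m‖) atTop := by
            refine limsup_le_limsup
              (Eventually.of_forall fun m => norm_sub_le_norm_sub_add_norm_sub _ _ _)
              ((isBoundedUnder_of ⟨0, fun m => norm_nonneg _⟩ :
                IsBoundedUnder (· ≥ ·) atTop _).isCoboundedUnder_le) ?_
            exact isBoundedUnder_of ⟨‖xs n - x‖ + (‖x‖ + 1), fun m => by
              gcongr
              exact (norm_sub_le _ _).trans (by gcongr; exact hxsnorm m)⟩
          rwa [limsup_const_add atTop _ _ hbdd hcobdd] at step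
        calc sInf _ ≤ limsup (fun m => ‖xs n - xs m‖) atTop :=
              csInf_le hBddImg ⟨xs n, hmem n, rfl⟩
          _ ≤ ‖xs n - x‖ + r := h1
          _ ≤ (r + ε) + r := by
              rw [norm_sub_rev]; exact add_le_add hn.le le_rfl
          _ = 2 * r + ε := by ring
      have := le_of_forall_pos_le_add main
      linarith
    · -- every admissible `l` is at least `1 + a`
      rintro l ⟨_hl0, hl⟩
      have hmem : ∀ n : ℕ, rect (n + 1) ∈ convexHull ℝ (posProbC ∪ {a • oneL1}) := fun n =>
        subset_convexHull ℝ _ (Set.mem_union_left _ (rect_mem (n+1) (Nat.le_add_left 1 n)))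
      have hconv : ∀ᵐ t ∂μ01, Tendsto (fun n => ((rect (n+1) : Lp ℝ 1 μ01) : ℝ → ℝ) t) atTop
          (𝓝 (((0 : Lp ℝ 1 μ01) : ℝ → ℝ) t)) := by
        filter_upwards [rect_tendsto_ae, Lp.coeFn_zero ℝ 1 μ01] with t h1 h2
        rw [h2, Pi.zero_apply]
        exact h1.comp (tendsto_add_atTop_nat 1)
      have happ := hl (fun n => rect (n + 1)) 0 hmem hconv
      have hls : limsup (fun n : ℕ => ‖(0 : Lp ℝ 1 μ01) - rect (n+1)‖) atTop = 1 := by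
        have ev : ∀ᶠ n : ℕ in atTop, ‖(0 : Lp ℝ 1 μ01) - rect (n+1)‖ = (1:ℝ) :=
          Eventually.of_forall fun n => by
            rw [zero_sub, norm_neg, norm_rect _ (Nat.le_add_left 1 n)]
        rw [limsup_congr ev, limsup_const]
      rw [hls, mul_one] at happ
      refine le_trans (le_csInf (Set.Nonempty.image _ ⟨a • oneL1, hCane⟩) ?_) happ
      rintro b ⟨c, hc, rfl⟩
      show 1 + a ≤ limsup (fun n : ℕ => ‖c - rect (n+1)‖) atTop
      have ev : ∀ᶠ n : ℕ in atTop, ‖c - rect (n+1)‖ = ‖rect (n+1) - c‖ :=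
        Eventually.of_forall fun n => norm_sub_rev _ _
      rw [limsup_congr ev]
      exact key_limsup ha hc 1
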